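/- Let G be a nilpotent torsion-free group and H its largest divisible subgroup. Then the quotient G/H is torsion-free. -/

import Mathlib

/-- A subgroup `D` is divisible if every element of `D` has an `n`-th root in `D`
for every positive integer `n`. -/
def Subgroup.IsDivisible {G : Type*} [Group G] (D : Subgroup G) : Prop :=
  ∀ d ∈ D, ∀ n : ℕ, 0 < n → ∃ x ∈ D, x ^ n = d

/-- Old Mathlib definition (removed since): no nontrivial element of `G` has finite order. -/
def Monoid.IsTorsionFree (G : Type*) [Monoid G] : Prop :=
  ∀ g : G, g ≠ 1 → ¬IsOfFinOrder g

section Aux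

open Subgroup
open scoped Pointwise
open scoped commutatorElement

private lemma lcs_succ_comm {G : Type*} [Group G] (n : ℕ) :
    Subgroup.lowerCentralSeries (⊤ : Subgroup G) (n + 1) = ⁅Subgroup.lowerCentralSeries (⊤ : Subgroup G) n, (⊤ : Subgroup G)⁆ := rfl

/-- Torsion-free in terms of powers. -/
private lemma tf_pow {G : Type*} [Group G] (h : Monoid.IsTorsionFree G) {g : G} {n : ℕ}
    (hn : 0 < n) (hg : g ^ n = 1) : g = 1 := by
  by_contra hg1
  exact h g hg1 (isOfFinOrder_iff_pow_eq_one.mpr ⟨n, hn, hg⟩)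

/-- Subgroups of torsion-free groups are torsion-free. -/
private lemma tf_subgroup {G : Type*} [Group G] (h : Monoid.IsTorsionFree G) (K : Subgroup G) :
    Monoid.IsTorsionFree K := by
  intro g hg hfo
  obtain ⟨n, hn, hpow⟩ := isOfFinOrder_iff_pow_eq_one.mp hfo
  apply hg
  have hcoe : (g : G) ^ n = 1 := by exact_mod_cast congrArg (Subtype.val) hpow
  exact Subtype.ext (tf_pow h hn hcoe)

/-- Mal'cev: roots are unique in torsion-free nilpotent groups; proved by induction
on the nilpotency class. -/
private lemma uniqueRoots : ∀ (c : ℕ) {G : Type*} [Group G] [Group.IsNilpotent G],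
    Group.nilpotencyClass G ≤ c → Monoid.IsTorsionFree G →
    ∀ x y : G, ∀ n : ℕ, 0 < n → x ^ n = y ^ n → x = y := by
  intro c
  induction c with
  | zero =>
    intro G _ _ hc _ x y n hn _
    have hsub : Subsingleton G :=
      nilpotencyClass_zero_iff_subsingleton.mp (Nat.le_zero.mp hc)
    exact Subsingleton.elim x y
  | succ c ih =>
    intro G _ _ hc htf x y n hn hxy
    -- Step A: if a power of w is central, then w is central.
    have hZ : ∀ w : G, ∀ m : ℕ, 0 < m → w ^ m ∈ center G → w ∈ center G := by
      intro w m hm hw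
      by_cases h1 : Group.nilpotencyClass G ≤ 1
      · -- G is abelian
        have htop : (⊤ : Subgroup G) ≤ center G := by
          calc (⊤ : Subgroup G) = Subgroup.upperCentralSeries G (Group.nilpotencyClass G) :=
                (Subgroup.upperCentralSeries_nilpotencyClass).symm
            _ ≤ Subgroup.upperCentralSeries G 1 := Subgroup.upperCentralSeries_mono G h1
            _ = center G := Subgroup.upperCentralSeries_one G
        exact htop (mem_top w)
      · -- class ≥ 2, so c ≥ 1
        have hc1 : 1 ≤ c := by omega
        set γ1 := Subgroup.lowerCentralSeries (⊤ : Subgroup G) 1 with hγ1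
        set γ2 := Subgroup.lowerCentralSeries (⊤ : Subgroup G) 2 with hγ2
        have hγ2eq : γ2 = ⁅γ1, (⊤ : Subgroup G)⁆ := lcs_succ_comm 1
        set H' : Subgroup G := closure {w} ⊔ γ1 with hH'
        -- commuting modulo γ2
        set π : G →* G ⧸ γ2 := QuotientGroup.mk' γ2 with hπ
        have hker : ∀ z : G, π z = 1 ↔ z ∈ γ2 := fun z => QuotientGroup.eq_one_iff z
        have hcent : ∀ u ∈ γ1, ∀ v : G, Commute (π u) (π v) := by
          intro u hu v
          rw [← commutatorElement_eq_one_iff_commute, ← map_commutatorElement, hker, hγ2eq]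
          exact Subgroup.commutator_mem_commutator hu (mem_top v)
        -- the subgroup H' is abelian modulo γ2
        have habel : ∀ a ∈ H', ∀ b ∈ H', ⁅a, b⁆ ∈ γ2 := by
          have hdecomp : ∀ a ∈ H', ∃ k : ℤ, ∃ u ∈ γ1, a = w ^ k * u := by
            intro a ha
            have : a ∈ ((closure {w} : Subgroup G) : Set G) * (γ1 : Set G) := by
              rw [← Subgroup.mul_normal]; exact ha
            obtain ⟨cw, hcw, u, hu, rfl⟩ := this
            obtain ⟨k, rfl⟩ := Subgroup.mem_closure_singleton.mp hcw
            exact ⟨k, u, hu, rfl⟩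
          intro a ha b hb
          obtain ⟨k, u, hu, rfl⟩ := hdecomp a ha
          obtain ⟨l, v, hv, rfl⟩ := hdecomp b hb
          rw [← hker, map_commutatorElement, commutatorElement_eq_one_iff_commute,
            map_mul, map_mul]
          have cAC : Commute (π (w ^ k)) (π (w ^ l)) :=
            (((Commute.refl w).zpow_zpow k l).map π)
          have cAD : Commute (π (w ^ k)) (π v) := (hcent v hv (w ^ k)).symm
          have cBC : Commute (π u) (π (w ^ l)) := hcent u hu (w ^ l)
          have cBD : Commute (π u) (π v) := hcent u hu v
          exact Commute.mul_left (Commute.mul_right cAC cAD) (Commute.mul_right cBC cBD)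
        -- hence the lower central series of H' sits one step deeper than that of G
        have hlcs : ∀ k : ℕ, (Subgroup.lowerCentralSeries (⊤ : Subgroup H') (k + 1)).map H'.subtype ≤
            Subgroup.lowerCentralSeries (⊤ : Subgroup G) (k + 2) := by
          intro k
          induction k with
          | zero =>
            rw [lcs_succ_comm, Subgroup.lowerCentralSeries_zero, Subgroup.map_commutator]
            rw [← hγ2]
            refine Subgroup.commutator_le.mpr ?_
            rintro g₁ ⟨a, -, rfl⟩ g₂ ⟨b, -, rfl⟩
            exact habel a a.2 b b.2
          | succ k ihk =>
            rw [lcs_succ_comm, Subgroup.map_commutator]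
            calc ⁅(Subgroup.lowerCentralSeries (⊤ : Subgroup H') (k+1)).map H'.subtype,
                  (⊤ : Subgroup H').map H'.subtype⁆
                ≤ ⁅Subgroup.lowerCentralSeries (⊤ : Subgroup G) (k + 2), (⊤ : Subgroup G)⁆ :=
                  Subgroup.commutator_mono ihk le_top
              _ = Subgroup.lowerCentralSeries (⊤ : Subgroup G) (k + 3) := (lcs_succ_comm (k+2)).symm
        -- so H' is nilpotent of class ≤ c
        have hGbot : Subgroup.lowerCentralSeries (⊤ : Subgroup G) (c + 1) = ⊥ :=
          Subgroup.lowerCentralSeries_eq_bot_iff_nilpotencyClass_le.mpr hc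
        have hH'bot : Subgroup.lowerCentralSeries (⊤ : Subgroup H') c = ⊥ := by
          obtain ⟨d, rfl⟩ : ∃ d, c = d + 1 := ⟨c - 1, by omega⟩
          have := (hlcs d).trans (le_of_eq hGbot)
          rw [eq_bot_iff]
          intro z hz
          have hmem : H'.subtype z ∈ (⊥ : Subgroup G) := this ⟨z, hz, rfl⟩
          exact Subgroup.mem_bot.mpr (Subtype.ext (Subgroup.mem_bot.mp hmem))
        haveI : Group.IsNilpotent H' := Subgroup.nilpotent_iff_lowerCentralSeries.mpr ⟨c, hH'bot⟩
        have hH'class : Group.nilpotencyClass H' ≤ c :=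
          Subgroup.lowerCentralSeries_eq_bot_iff_nilpotencyClass_le.mp hH'bot
        -- now apply the induction hypothesis inside H'
        rw [Subgroup.mem_center_iff]
        intro g
        have hwH' : w ∈ H' := le_sup_left (α := Subgroup G) (mem_closure_singleton.mpr ⟨1, zpow_one w⟩)
        have hconjH' : g * w * g⁻¹ ∈ H' := by
          have hcomm : w⁻¹ * (g * w * g⁻¹) = ⁅w⁻¹, g⁆ := by
            rw [commutatorElement_def]; group
          have hmem : ⁅w⁻¹, g⁆ ∈ γ1 := by
            rw [hγ1, lcs_succ_comm, Subgroup.lowerCentralSeries_zero]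
            exact Subgroup.commutator_mem_commutator (mem_top _) (mem_top _)
          have : g * w * g⁻¹ = w * ⁅w⁻¹, g⁆ := by rw [← hcomm]; group
          rw [this]
          exact H'.mul_mem hwH' (le_sup_right (α := Subgroup G) hmem)
        have hpow : (⟨g * w * g⁻¹, hconjH'⟩ : H') ^ m = (⟨w, hwH'⟩ : H') ^ m := by
          ext
          push_cast
          have h2 : (g * w * g⁻¹) ^ m = g * w ^ m * g⁻¹ := by
            rw [show g * w * g⁻¹ = (MulAut.conj g) w from rfl, ← map_pow]; rfl
          rw [h2]
          have := (Subgroup.mem_center_iff.mp hw g).symm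
          rw [← this]; group
        have heq := ih hH'class (tf_subgroup htf H')
          (⟨g * w * g⁻¹, hconjH'⟩ : H') (⟨w, hwH'⟩ : H') m hm hpow
        have heq' : g * w * g⁻¹ = w := congrArg Subtype.val heq
        calc g * w = (g * w * g⁻¹) * g := by group
          _ = w * g := by rw [heq']
    -- Step B: the quotient by the center is torsion-free of class ≤ c
    have hQclass : Group.nilpotencyClass (G ⧸ center G) ≤ c := by
      rw [nilpotencyClass_quotient_center]; omega
    have hQtf : Monoid.IsTorsionFree (G ⧸ center G) := by
      intro q hq hfo
      obtain ⟨m, hm, hpow⟩ := isOfFinOrder_iff_pow_eq_one.mp hfo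
      obtain ⟨w, rfl⟩ := QuotientGroup.mk_surjective q
      apply hq
      have hwm : w ^ m ∈ center G := by
        rw [← QuotientGroup.eq_one_iff]
        simpa using hpow
      have := hZ w m hm hwm
      simpa [QuotientGroup.eq_one_iff] using this
    -- conclude
    have hxyQ : (QuotientGroup.mk' (center G)) x = (QuotientGroup.mk' (center G)) y := by
      apply ih hQclass hQtf _ _ n hn
      rw [← map_pow, ← map_pow, hxy]
    obtain ⟨z0, hz0, hz0eq⟩ := (QuotientGroup.mk'_eq_mk' (center G)).mp hxyQ
    have hcz : Commute x z0 := Subgroup.mem_center_iff.mp hz0 x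
    have hpowa : x ^ n * z0 ^ n = x ^ n * 1 := by
      rw [← hcz.mul_pow, hz0eq, ← hxy, mul_one]
    have hzn : z0 ^ n = 1 := mul_left_cancel hpowa
    rw [← hz0eq, tf_pow htf hn hzn, mul_one]

end Aux

/-- If `H` is the largest divisible subgroup of a nilpotent torsion-free group `G`,
then `G/H` is torsion-free. -/
theorem stmt13 {G : Type*} [Group G] [Group.IsNilpotent G]
    (htf : Monoid.IsTorsionFree G)
    (H : Subgroup G) [H.Normal] (hHdiv : H.IsDivisible)
    (hHmax : ∀ D : Subgroup G, D.IsDivisible → D ≤ H) :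
    Monoid.IsTorsionFree (G ⧸ H) := by
  intro q hq hfo
  obtain ⟨n, hn, hpow⟩ := isOfFinOrder_iff_pow_eq_one.mp hfo
  obtain ⟨x, rfl⟩ := QuotientGroup.mk_surjective q
  apply hq
  have hxn : x ^ n ∈ H := by
    rw [← QuotientGroup.eq_one_iff]
    simpa using hpow
  obtain ⟨d, hdH, hd⟩ := hHdiv _ hxn n hn
  have : d = x := uniqueRoots (Group.nilpotencyClass G) le_rfl htf d x n hn (by rw [hd])
  rw [QuotientGroup.eq_one_iff]
  exact this ▸ hdH
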